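/- arXiv:1205.3006 — 6 statements merged into one kernel-verified Lean document; each statement's English description precedes it below -/
import Mathlib

section
/- Let z > 0 and q₀, q₊, q₋ ∈ ℝ, and let q̂ : ℝ → ℝ be the piecewise linear kernel q̂(ξ) = q₀ + q₊ξ for ξ ≥ 0 and q̂(ξ) = q₀ + q₋ξ for ξ < 0. Let h : [−z, z] → ℝ be continuous. Then the function F(ξ) = ∫_{−z}^{z} h(s) q̂(ξ − s) ds is twice differentiable at every ξ ∈ (−z, z), with F''(ξ) = (q₊ − q₋) h(ξ). -/
open Set intervalIntegral

/-- For the piecewise linear kernel `q̂` and a continuous shape function `h` on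
`[−z,z]`, the convolution `F(ξ) = ∫_{−z}^{z} h(s) q̂(ξ−s) ds` is twice
differentiable on `(−z,z)` with `F''(ξ) = (q₊ − q₋) h(ξ)`. -/
theorem convolution_pwlinear_kernel_second_deriv
    (z q₀ qp qm : ℝ) (hz : 0 < z)
    (qhat : ℝ → ℝ)
    (hqhat : ∀ ξ : ℝ, qhat ξ = if 0 ≤ ξ then q₀ + qp * ξ else q₀ + qm * ξ)
    (h : ℝ → ℝ) (hcont : ContinuousOn h (Icc (-z) z))
    (F : ℝ → ℝ)
    (hF : F = fun ξ : ℝ => ∫ s in (-z)..z, h s * qhat (ξ - s)) :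
    ∀ ξ ∈ Ioo (-z) z,
      DifferentiableAt ℝ F ξ ∧ DifferentiableAt ℝ (deriv F) ξ ∧
        deriv (deriv F) ξ = (qp - qm) * h ξ := by
  -- continuity of the kernel
  have hqc : Continuous qhat := by
    have : qhat = fun x : ℝ => if (0:ℝ) ≤ x then q₀ + qp * x else q₀ + qm * x :=
      funext hqhat
    rw [this]
    apply Continuous.if_le (by continuity) (by continuity) continuous_const continuous_id
    intro x hx
    simp only [id_eq] at hx
    rw [← hx]
    ring
  -- auxiliary functions
  set A : ℝ → ℝ := fun t => ∫ s in (-z)..t, h s with hA_def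
  set B : ℝ → ℝ := fun t => ∫ s in (-z)..t, s * h s with hB_def
  set A2 : ℝ → ℝ := fun t => ∫ s in t..z, h s with hA2_def
  set B2 : ℝ → ℝ := fun t => ∫ s in t..z, s * h s with hB2_def
  set G : ℝ → ℝ := fun t =>
    q₀ * A t + qp * (t * A t - B t) + q₀ * A2 t + qm * (t * A2 t - B2 t) with hG_def
  have hshcont : ContinuousOn (fun s => s * h s) (Icc (-z) z) :=
    continuousOn_id.mul hcont
  -- integrability on subintervals
  have hintL : ∀ t ∈ Icc (-z) z, IntervalIntegrable h MeasureTheory.volume (-z) t := by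
    intro t ht
    apply ContinuousOn.intervalIntegrable
    apply hcont.mono
    rw [uIcc_of_le ht.1]
    exact Icc_subset_Icc le_rfl ht.2
  have hintL' : ∀ t ∈ Icc (-z) z,
      IntervalIntegrable (fun s => s * h s) MeasureTheory.volume (-z) t := by
    intro t ht
    apply ContinuousOn.intervalIntegrable
    apply hshcont.mono
    rw [uIcc_of_le ht.1]
    exact Icc_subset_Icc le_rfl ht.2
  have hintR : ∀ t ∈ Icc (-z) z, IntervalIntegrable h MeasureTheory.volume t z := by
    intro t ht
    apply ContinuousOn.intervalIntegrable
    apply hcont.mono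
    rw [uIcc_of_le ht.2]
    exact Icc_subset_Icc ht.1 le_rfl
  have hintR' : ∀ t ∈ Icc (-z) z,
      IntervalIntegrable (fun s => s * h s) MeasureTheory.volume t z := by
    intro t ht
    apply ContinuousOn.intervalIntegrable
    apply hshcont.mono
    rw [uIcc_of_le ht.2]
    exact Icc_subset_Icc ht.1 le_rfl
  -- F = G on Ioo (-z) z
  have hFG : ∀ t ∈ Ioo (-z) z, F t = G t := by
    intro t ht
    have ht' : t ∈ Icc (-z) z := Ioo_subset_Icc_self ht
    have hker : ContinuousOn (fun s => h s * qhat (t - s)) (Icc (-z) z) :=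
      hcont.mul ((hqc.comp (continuous_const.sub continuous_id)).continuousOn)
    have hi1 : IntervalIntegrable (fun s => h s * qhat (t - s))
        MeasureTheory.volume (-z) t := by
      apply ContinuousOn.intervalIntegrable
      apply hker.mono
      rw [uIcc_of_le ht'.1]
      exact Icc_subset_Icc le_rfl ht'.2
    have hi2 : IntervalIntegrable (fun s => h s * qhat (t - s))
        MeasureTheory.volume t z := by
      apply ContinuousOn.intervalIntegrable
      apply hker.mono
      rw [uIcc_of_le ht'.2]
      exact Icc_subset_Icc ht'.1 le_rfl
    have hsplit : F t = (∫ s in (-z)..t, h s * qhat (t - s))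
        + ∫ s in t..z, h s * qhat (t - s) := by
      rw [hF]
      exact (integral_add_adjacent_intervals hi1 hi2).symm
    have hleft : (∫ s in (-z)..t, h s * qhat (t - s))
        = q₀ * A t + qp * (t * A t - B t) := by
      have e1 : ∀ s ∈ uIcc (-z) t, h s * qhat (t - s)
          = q₀ * h s + (qp * t) * h s - qp * (s * h s) := by
        intro s hs
        rw [uIcc_of_le ht'.1] at hs
        rw [hqhat, if_pos (by linarith [hs.2])]
        ring
      rw [integral_congr e1]
      rw [integral_sub (((hintL t ht').const_mul q₀).add
          ((hintL t ht').const_mul (qp * t))) ((hintL' t ht').const_mul qp)]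
      rw [integral_add ((hintL t ht').const_mul q₀) ((hintL t ht').const_mul (qp * t))]
      rw [integral_const_mul, integral_const_mul, integral_const_mul]
      simp only [hA_def, hB_def]
      ring
    have hright : (∫ s in t..z, h s * qhat (t - s))
        = q₀ * A2 t + qm * (t * A2 t - B2 t) := by
      have e2 : ∀ s ∈ uIcc t z, h s * qhat (t - s)
          = q₀ * h s + (qm * t) * h s - qm * (s * h s) := by
        intro s hs
        rw [uIcc_of_le ht'.2] at hs
        rw [hqhat]
        split_ifs with h0
        · have : s = t := le_antisymm (by linarith) hs.1
          subst this
          ring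
        · ring
      rw [integral_congr e2]
      rw [integral_sub (((hintR t ht').const_mul q₀).add
          ((hintR t ht').const_mul (qm * t))) ((hintR' t ht').const_mul qm)]
      rw [integral_add ((hintR t ht').const_mul q₀) ((hintR t ht').const_mul (qm * t))]
      rw [integral_const_mul, integral_const_mul, integral_const_mul]
      simp only [hA2_def, hB2_def]
      ring
    rw [hsplit, hleft, hright, hG_def]
    ring
  -- derivatives of A, B, A2, B2 at interior points
  have hmeas : ∀ t ∈ Ioo (-z) z, StronglyMeasurableAtFilter h (nhds t) :=
    ContinuousOn.stronglyMeasurableAtFilter isOpen_Ioo (hcont.mono Ioo_subset_Icc_self)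
  have hmeas' : ∀ t ∈ Ioo (-z) z,
      StronglyMeasurableAtFilter (fun s => s * h s) (nhds t) :=
    ContinuousOn.stronglyMeasurableAtFilter isOpen_Ioo (hshcont.mono Ioo_subset_Icc_self)
  have hcAt : ∀ t ∈ Ioo (-z) z, ContinuousAt h t := fun t ht =>
    hcont.continuousAt (Icc_mem_nhds ht.1 ht.2)
  have hcAt' : ∀ t ∈ Ioo (-z) z, ContinuousAt (fun s => s * h s) t := fun t ht =>
    (continuousAt_id.mul (hcAt t ht))
  have hA' : ∀ t ∈ Ioo (-z) z, HasDerivAt A (h t) t := fun t ht =>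
    integral_hasDerivAt_right (hintL t (Ioo_subset_Icc_self ht)) (hmeas t ht) (hcAt t ht)
  have hB' : ∀ t ∈ Ioo (-z) z, HasDerivAt B (t * h t) t := fun t ht =>
    integral_hasDerivAt_right (hintL' t (Ioo_subset_Icc_self ht)) (hmeas' t ht) (hcAt' t ht)
  have hA2' : ∀ t ∈ Ioo (-z) z, HasDerivAt A2 (-(h t)) t := fun t ht =>
    integral_hasDerivAt_left (hintR t (Ioo_subset_Icc_self ht)) (hmeas t ht) (hcAt t ht)
  have hB2' : ∀ t ∈ Ioo (-z) z, HasDerivAt B2 (-(t * h t)) t := fun t ht =>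
    integral_hasDerivAt_left (hintR' t (Ioo_subset_Icc_self ht)) (hmeas' t ht) (hcAt' t ht)
  -- derivative of G
  have hGd : ∀ t ∈ Ioo (-z) z, HasDerivAt G (qp * A t + qm * A2 t) t := by
    intro t ht
    have big := ((((hA' t ht).const_mul q₀).add
        ((((hasDerivAt_id t).mul (hA' t ht)).sub (hB' t ht)).const_mul qp)).add
        ((hA2' t ht).const_mul q₀)).add
        ((((hasDerivAt_id t).mul (hA2' t ht)).sub (hB2' t ht)).const_mul qm)
    refine big.congr_deriv ?_
    simp only [id_eq]
    ring
  intro ξ hξ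
  have hnhds : Ioo (-z) z ∈ nhds ξ := isOpen_Ioo.mem_nhds hξ
  have hFGev : F =ᶠ[nhds ξ] G := Filter.eventuallyEq_of_mem hnhds hFG
  have hFd : HasDerivAt F (qp * A ξ + qm * A2 ξ) ξ :=
    (hGd ξ hξ).congr_of_eventuallyEq hFGev
  -- deriv F agrees with D on Ioo
  have hderivF : ∀ t ∈ Ioo (-z) z, deriv F t = qp * A t + qm * A2 t := by
    intro t ht
    exact ((hGd t ht).congr_of_eventuallyEq
      (Filter.eventuallyEq_of_mem (isOpen_Ioo.mem_nhds ht) hFG)).deriv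
  have hDd : HasDerivAt (fun t => qp * A t + qm * A2 t) ((qp - qm) * h ξ) ξ := by
    have big := ((hA' ξ hξ).const_mul qp).add ((hA2' ξ hξ).const_mul qm)
    refine big.congr_deriv ?_
    ring
  have hFd2 : HasDerivAt (deriv F) ((qp - qm) * h ξ) ξ :=
    hDd.congr_of_eventuallyEq (Filter.eventuallyEq_of_mem hnhds hderivF)
  exact ⟨hFd.differentiableAt, hFd2.differentiableAt, hFd2.deriv⟩
end

section
/- Let z > 0 and q₀, q₊, q₋ ∈ ℝ with q₊ ≠ q₋, and let q̂ : ℝ → ℝ be the piecewise linear kernel q̂(ξ) = q₀ + q₊ξ for ξ ≥ 0 and q̂(ξ) = q₀ + q₋ξ for ξ < 0. If h : [−z, z] → ℝ is continuous and ∫_{−z}^{z} h(s) q̂(ξ − s) ds = 0 for all ξ ∈ (−z, z), then h is identically zero on [−z, z]. In other words, the approximate first-kind integral equation has only the trivial continuous solution. -/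
open Set intervalIntegral

/-- With the piecewise linear kernel `q̂` and `q₊ ≠ q₋`, the first-kind integral
equation `∫_{−z}^{z} h(s) q̂(ξ−s) ds = 0` for all `ξ ∈ (−z,z)` has only the
trivial continuous solution `h ≡ 0` on `[−z,z]`. -/
theorem pwlinear_first_kind_only_trivial_solution
    (z q₀ qp qm : ℝ) (hz : 0 < z) (hq : qp ≠ qm)
    (qhat : ℝ → ℝ)
    (hqhat : ∀ ξ : ℝ, qhat ξ = if 0 ≤ ξ then q₀ + qp * ξ else q₀ + qm * ξ)
    (h : ℝ → ℝ) (hcont : ContinuousOn h (Icc (-z) z))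
    (heq : ∀ ξ ∈ Ioo (-z) z, (∫ s in (-z)..z, h s * qhat (ξ - s)) = 0) :
    ∀ ξ ∈ Icc (-z) z, h ξ = 0 := by
  have hzz : -z < z := by linarith
  have hmemL : (-z) ∈ Icc (-z) z := ⟨le_refl _, by linarith⟩
  have hmemR : z ∈ Icc (-z) z := ⟨by linarith, le_refl _⟩
  -- integrability of h and s * h s on subintervals of [-z, z]
  have hInt : ∀ a b, a ∈ Icc (-z) z → b ∈ Icc (-z) z →
      IntervalIntegrable h MeasureTheory.volume a b := fun a b ha hb =>
    (hcont.mono (uIcc_subset_Icc ha hb)).intervalIntegrable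
  have hcont' : ContinuousOn (fun s => s * h s) (Icc (-z) z) :=
    continuousOn_id.mul hcont
  have hInt' : ∀ a b, a ∈ Icc (-z) z → b ∈ Icc (-z) z →
      IntervalIntegrable (fun s => s * h s) MeasureTheory.volume a b := fun a b ha hb =>
    (hcont'.mono (uIcc_subset_Icc ha hb)).intervalIntegrable
  set G : ℝ → ℝ := fun x => ∫ s in (-z)..x, h s with hGdef
  set K : ℝ → ℝ := fun x => ∫ s in (-z)..x, s * h s with hKdef
  -- compute linear-kernel pieces
  have piece : ∀ (a b c ξ : ℝ), a ∈ Icc (-z) z → b ∈ Icc (-z) z →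
      (∫ s in a..b, h s * (q₀ + c * (ξ - s)))
        = (q₀ + c * ξ) * (∫ s in a..b, h s) - c * (∫ s in a..b, s * h s) := by
    intro a b c ξ ha hb
    have hrw : ∀ s : ℝ, h s * (q₀ + c * (ξ - s))
        = (q₀ + c * ξ) * h s - c * (s * h s) := by intro s; ring
    simp_rw [hrw]
    rw [intervalIntegral.integral_sub ((hInt a b ha hb).const_mul _)
        ((hInt' a b ha hb).const_mul _),
      intervalIntegral.integral_const_mul, intervalIntegral.integral_const_mul]
  -- key algebraic identity from the integral equation
  have key : ∀ ξ ∈ Ioo (-z) z,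
      (qp - qm) * (ξ * G ξ - K ξ) + q₀ * G z + qm * ξ * G z - qm * K z = 0 := by
    intro ξ hξ
    have hξmem : ξ ∈ Icc (-z) z := ⟨hξ.1.le, hξ.2.le⟩
    have hqc : Continuous qhat := by
      have hfq : qhat = fun t => if 0 ≤ t then q₀ + qp * t else q₀ + qm * t :=
        funext hqhat
      rw [hfq]
      apply Continuous.if_le (by continuity) (by continuity)
        continuous_const continuous_id
      intro x hx
      simp only [id] at hx
      rw [← hx]; ring
    have hqcs : Continuous fun s => qhat (ξ - s) :=
      hqc.comp (continuous_const.sub continuous_id)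
    have hsplit : (∫ s in (-z)..z, h s * qhat (ξ - s))
        = (∫ s in (-z)..ξ, h s * qhat (ξ - s)) + ∫ s in ξ..z, h s * qhat (ξ - s) := by
      rw [intervalIntegral.integral_add_adjacent_intervals]
      · exact IntervalIntegrable.mul_continuousOn (hInt _ _ hmemL hξmem)
          hqcs.continuousOn
      · exact IntervalIntegrable.mul_continuousOn (hInt _ _ hξmem hmemR)
          hqcs.continuousOn
    have hleft : (∫ s in (-z)..ξ, h s * qhat (ξ - s))
        = (∫ s in (-z)..ξ, h s * (q₀ + qp * (ξ - s))) := by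
      apply intervalIntegral.integral_congr
      intro s hs
      rw [uIcc_of_le hξ.1.le] at hs
      have hpos : 0 ≤ ξ - s := by linarith [hs.2]
      simp only [hqhat, if_pos hpos]
    have hright : (∫ s in ξ..z, h s * qhat (ξ - s))
        = (∫ s in ξ..z, h s * (q₀ + qm * (ξ - s))) := by
      apply intervalIntegral.integral_congr
      intro s hs
      rw [uIcc_of_le hξ.2.le] at hs
      rcases eq_or_lt_of_le hs.1 with heqs | hlts
      · simp only [hqhat, ← heqs, sub_self, le_refl, if_pos, mul_zero]
      · have hneg : ¬ (0 ≤ ξ - s) := by linarith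
        simp only [hqhat, if_neg hneg]
    have hadj : G ξ + (∫ s in ξ..z, h s) = G z :=
      intervalIntegral.integral_add_adjacent_intervals (hInt _ _ hmemL hξmem)
        (hInt _ _ hξmem hmemR)
    have hadj' : K ξ + (∫ s in ξ..z, s * h s) = K z :=
      intervalIntegral.integral_add_adjacent_intervals (hInt' _ _ hmemL hξmem)
        (hInt' _ _ hξmem hmemR)
    have h0 := heq ξ hξ
    rw [hsplit, hleft, hright, piece _ _ _ _ hmemL hξmem, piece _ _ _ _ hξmem hmemR] at h0
    have e1 : (∫ s in ξ..z, h s) = G z - G ξ := by linarith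
    have e2 : (∫ s in ξ..z, s * h s) = K z - K ξ := by linarith
    rw [e1, e2] at h0
    linear_combination h0
  -- Φ(ξ) = ξ G ξ - K ξ is affine on (-z, z)
  set b : ℝ := -qm * G z / (qp - qm) with hbdef
  set a : ℝ := (qm * K z - q₀ * G z) / (qp - qm) with hadef
  have hqne : qp - qm ≠ 0 := sub_ne_zero.mpr hq
  have haff : ∀ ξ ∈ Ioo (-z) z, ξ * G ξ - K ξ = a + b * ξ := by
    intro ξ hξ
    have := key ξ hξ
    rw [hadef, hbdef]
    field_simp
    linear_combination this
  -- derivatives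
  have hGderiv : ∀ ξ ∈ Ioo (-z) z, HasDerivAt G (h ξ) ξ := by
    intro ξ hξ
    have hmem : Icc (-z) z ∈ nhds ξ := Icc_mem_nhds hξ.1 hξ.2
    exact intervalIntegral.integral_hasDerivAt_right
      (hInt _ _ hmemL ⟨hξ.1.le, hξ.2.le⟩)
      ⟨Icc (-z) z, hmem, hcont.aestronglyMeasurable measurableSet_Icc⟩
      (hcont.continuousAt hmem)
  have hKderiv : ∀ ξ ∈ Ioo (-z) z, HasDerivAt K (ξ * h ξ) ξ := by
    intro ξ hξ
    have hmem : Icc (-z) z ∈ nhds ξ := Icc_mem_nhds hξ.1 hξ.2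
    exact intervalIntegral.integral_hasDerivAt_right
      (hInt' _ _ hmemL ⟨hξ.1.le, hξ.2.le⟩)
      ⟨Icc (-z) z, hmem, hcont'.aestronglyMeasurable measurableSet_Icc⟩
      (hcont'.continuousAt hmem)
  -- G is constant (= b) on (-z, z)
  have hGconst : ∀ ξ ∈ Ioo (-z) z, G ξ = b := by
    intro ξ hξ
    have hΦ : HasDerivAt (fun x => x * G x - K x) (G ξ) ξ := by
      have := ((hasDerivAt_id ξ).mul (hGderiv ξ hξ)).sub (hKderiv ξ hξ)
      exact this.congr_deriv (by simp only [id_eq]; ring)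
    have hev : (fun x => x * G x - K x) =ᶠ[nhds ξ] (fun x => a + b * x) := by
      filter_upwards [isOpen_Ioo.mem_nhds hξ] with x hx
      exact haff x hx
    have hΦ2 : HasDerivAt (fun x => a + b * x) (G ξ) ξ := hΦ.congr_of_eventuallyEq hev.symm
    have hlin : HasDerivAt (fun x : ℝ => a + b * x) b ξ := by
      simpa using ((hasDerivAt_id ξ).const_mul b).const_add a
    exact hΦ2.unique hlin
  -- hence h = 0 on (-z, z)
  have hIoo : ∀ ξ ∈ Ioo (-z) z, h ξ = 0 := by
    intro ξ hξ
    have hev : G =ᶠ[nhds ξ] (fun _ => b) := by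
      filter_upwards [isOpen_Ioo.mem_nhds hξ] with x hx
      exact hGconst x hx
    have hG0 : HasDerivAt G 0 ξ :=
      (hasDerivAt_const ξ b).congr_of_eventuallyEq hev
    exact (hGderiv ξ hξ).unique hG0
  -- extend to the closed interval by continuity
  intro ξ hξ
  have hcl : ξ ∈ closure (Ioo (-z) z) := by
    rw [closure_Ioo hzz.ne]; exact hξ
  have hne : (nhdsWithin ξ (Ioo (-z) z)).NeBot :=
    mem_closure_iff_nhdsWithin_neBot.mp hcl
  have h1 : Filter.Tendsto h (nhdsWithin ξ (Ioo (-z) z)) (nhds (h ξ)) :=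
    (hcont ξ hξ).mono_left (nhdsWithin_mono _ Ioo_subset_Icc_self)
  have h2 : Filter.Tendsto h (nhdsWithin ξ (Ioo (-z) z)) (nhds 0) := by
    apply Filter.Tendsto.congr' _ tendsto_const_nhds
    filter_upwards [self_mem_nhdsWithin] with x hx
    exact (hIoo x hx).symm
  exact tendsto_nhds_unique h1 h2
end

section
/- Let z > 0 and q₊, q₋ ∈ ℝ with q₊ ≠ q₋, and for a > 0 define h_a(ξ) = [q₋ cosh((ξ−z)/a) − q₊ cosh((ξ+z)/a)] / [a (q₋ − q₊) sinh(2z/a)]. Then for every continuous function φ : ℝ → ℝ, lim_{a→0+} ∫_{−z}^{z} h_a(ξ) φ(ξ) dξ = [q₋ φ(−z) − q₊ φ(z)] / (q₋ − q₊). That is, h_a converges in the sense of distributions to q₋/(q₋−q₊) · δ(ξ+z) − q₊/(q₋−q₊) · δ(ξ−z) as a → 0+. -/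
open Set Filter intervalIntegral

/-- The bound `4/a * exp(-ε/a)` tends to `0` as `a → 0⁺`. -/
lemma aux_bound_tendsto {ε : ℝ} (hε : 0 < ε) :
    Tendsto (fun a : ℝ => 4 / a * Real.exp (-ε / a)) (nhdsWithin 0 (Ioi 0)) (nhds 0) := by
  have base : Tendsto (fun x : ℝ => x ^ 1 * Real.exp (-x)) atTop (nhds 0) :=
    Real.tendsto_pow_mul_exp_neg_atTop_nhds_zero 1
  have hεt : Tendsto (fun t : ℝ => ε * t) atTop atTop :=
    Tendsto.const_mul_atTop hε tendsto_id
  have h2 : Tendsto (fun t : ℝ => (ε * t) ^ 1 * Real.exp (-(ε * t))) atTop (nhds 0) :=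
    base.comp hεt
  have h3 : Tendsto (fun a : ℝ =>
      (4 / ε) * ((ε * a⁻¹) ^ 1 * Real.exp (-(ε * a⁻¹)))) (nhdsWithin 0 (Ioi 0)) (nhds 0) := by
    have h4 := (h2.const_mul (4 / ε)).comp tendsto_inv_nhdsGT_zero
    rw [mul_zero] at h4
    exact h4
  refine h3.congr fun a => ?_
  have hεne : ε ≠ 0 := hε.ne'
  rw [pow_one, show -(ε * a⁻¹) = -ε / a by ring,
    show (4:ℝ) / ε * (ε * a⁻¹ * Real.exp (-ε / a))
      = 4 / ε * ε * (a⁻¹ * Real.exp (-ε / a)) by ring,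
    div_mul_cancel₀ _ hεne, div_eq_mul_inv]
  ring

/-- The supremum bound for the peak kernel away from the peak tends to 0. -/
lemma M_tendsto {z b : ℝ} (hz : 0 < z) (hb : 0 ≤ b) (hbz : b < 2 * z) :
    Tendsto (fun a : ℝ => Real.cosh (b / a) / (a * Real.sinh (2 * z / a)))
      (nhdsWithin 0 (Ioi 0)) (nhds 0) := by
  set ε : ℝ := 2 * z - b with hεdef
  have hε : 0 < ε := by simp only [hεdef]; linarith
  apply squeeze_zero' ?_ ?_ (aux_bound_tendsto hε)
  · filter_upwards [self_mem_nhdsWithin] with a (ha : (0:ℝ) < a)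
    have hs : 0 < Real.sinh (2 * z / a) := by
      rw [Real.sinh_pos_iff]; positivity
    exact div_nonneg (Real.cosh_pos _).le (by positivity)
  · have hmem : Ioc (0 : ℝ) (2 * z) ∈ nhdsWithin (0 : ℝ) (Ioi 0) :=
      Ioc_mem_nhdsGT_of_mem ⟨le_rfl, by linarith⟩
    filter_upwards [hmem] with a ha
    obtain ⟨ha0, ha2z⟩ := ha
    have hy1 : (1 : ℝ) ≤ 2 * z / a := (one_le_div ha0).2 ha2z
    have hba : 0 ≤ b / a := div_nonneg hb ha0.le
    have hcosh : Real.cosh (b / a) ≤ Real.exp (b / a) := by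
      rw [Real.cosh_eq]
      have : Real.exp (-(b / a)) ≤ Real.exp (b / a) :=
        Real.exp_le_exp.2 (by linarith)
      linarith
    have hsinh : Real.exp (2 * z / a) / 4 ≤ Real.sinh (2 * z / a) := by
      rw [Real.sinh_eq]
      have h1 : Real.exp (-(2 * z / a)) ≤ 1 := Real.exp_le_one_iff.2 (by linarith)
      have h2 : (2 : ℝ) ≤ Real.exp (2 * z / a) := by
        have := Real.add_one_le_exp (2 * z / a)
        linarith
      linarith
    calc Real.cosh (b / a) / (a * Real.sinh (2 * z / a))
        ≤ Real.exp (b / a) / (a * (Real.exp (2 * z / a) / 4)) := by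
          apply div_le_div₀ (Real.exp_pos _).le hcosh (by positivity)
          exact mul_le_mul_of_nonneg_left hsinh ha0.le
      _ = 4 / a * Real.exp (-ε / a) := by
          have hexp : Real.exp (-ε / a) = Real.exp (b / a) / Real.exp (2 * z / a) := by
            rw [← Real.exp_sub]
            congr 1
            field_simp
            ring
          rw [hexp]
          have h0 : Real.exp (2 * z / a) ≠ 0 := (Real.exp_pos _).ne'
          field_simp

/-- Key peak-function lemma: the kernel `cosh((ξ+z)/a)/(a sinh(2z/a))` acts as an
approximation to the Dirac delta at `ξ = z` on `[-z, z]` as `a → 0⁺`. -/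
lemma peak_limit {z : ℝ} (hz : 0 < z) (ψ : ℝ → ℝ) (hψ : Continuous ψ) :
    Tendsto (fun a : ℝ => ∫ ξ in (-z)..z,
        Real.cosh ((ξ + z) / a) / (a * Real.sinh (2 * z / a)) * ψ ξ)
      (nhdsWithin 0 (Ioi 0)) (nhds (ψ z)) := by
  have hzz : (-z : ℝ) ≤ z := by linarith
  set K : ℝ → ℝ → ℝ := fun a ξ => Real.cosh ((ξ + z) / a) / (a * Real.sinh (2 * z / a))
    with hK
  have hS : ∀ a : ℝ, 0 < a → 0 < Real.sinh (2 * z / a) := by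
    intro a ha
    rw [Real.sinh_pos_iff]; positivity
  -- the kernel integrates to 1 over [-z, z] for a > 0
  have hint : ∀ a : ℝ, 0 < a → (∫ ξ in (-z)..z, K a ξ) = 1 := by
    intro a ha
    have haS : a * Real.sinh (2 * z / a) ≠ 0 := by
      have := hS a ha; positivity
    have hFTC : (∫ ξ in (-z)..z, Real.cosh ((ξ + z) / a))
        = a * Real.sinh (2 * z / a) := by
      have hderiv : ∀ ξ ∈ uIcc (-z) z,
          HasDerivAt (fun ξ : ℝ => a * Real.sinh ((ξ + z) / a))
            (Real.cosh ((ξ + z) / a)) ξ := by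
        intro ξ _
        have h1 : HasDerivAt (fun ξ : ℝ => (ξ + z) / a) (1 / a) ξ := by
          simpa using ((hasDerivAt_id ξ).add_const z).div_const a
        have h2 := (Real.hasDerivAt_sinh ((ξ + z) / a)).comp ξ h1
        have h3 := h2.const_mul a
        rw [mul_comm, mul_assoc, one_div_mul_cancel ha.ne', mul_one] at h3
        exact h3
      have hcont : IntervalIntegrable (fun ξ : ℝ => Real.cosh ((ξ + z) / a))
          MeasureTheory.volume (-z) z :=
        (Real.continuous_cosh.comp (by continuity)).intervalIntegrable _ _
      rw [intervalIntegral.integral_eq_sub_of_hasDerivAt hderiv hcont]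
      simp only [neg_add_cancel, zero_div, Real.sinh_zero, mul_zero, sub_zero]
      congr 2
      ring
    simp only [hK]
    rw [intervalIntegral.integral_div, hFTC, div_self haS]
  -- measurability / continuity of the kernel
  have hKcont : ∀ a : ℝ, Continuous (K a) := by
    intro a
    exact (Real.continuous_cosh.comp (by continuity)).div_const _
  -- apply the general peak-function theorem
  have key := tendsto_setIntegral_peak_smul_of_integrableOn_of_tendsto
    (μ := MeasureTheory.volume) (s := Icc (-z) z) (t := Icc (-z) z) (x₀ := z)
    (l := nhdsWithin (0 : ℝ) (Ioi 0)) (φ := K) (g := ψ) (a := ψ z)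
    measurableSet_Icc measurableSet_Icc subset_rfl self_mem_nhdsWithin
    (by simp)
    (by
      filter_upwards [self_mem_nhdsWithin] with a (ha : (0:ℝ) < a)
      intro x _
      exact div_nonneg (Real.cosh_pos _).le (by have := hS a ha; positivity))
    (by
      intro u hu hzu
      obtain ⟨ε₀, hε₀, hball⟩ := Metric.isOpen_iff.1 hu z hzu
      set ε : ℝ := min ε₀ z with hεdef
      have hε : 0 < ε := lt_min hε₀ hz
      have hεz : ε ≤ z := min_le_right _ _
      have hMt := M_tendsto (b := 2 * z - ε) hz (by linarith) (by linarith)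
      rw [Metric.tendstoUniformlyOn_iff]
      intro δ hδ
      filter_upwards [self_mem_nhdsWithin, (tendsto_order.1 hMt).2 δ hδ]
        with a (ha : (0:ℝ) < a) hMa ξ hξ
      obtain ⟨⟨hξ1, hξ2⟩, hξu⟩ := hξ
      have hξball : ξ ∉ Metric.ball z ε₀ := fun h => hξu (hball h)
      have hdist : ε₀ ≤ |ξ - z| := by
        by_contra h
        push_neg at h
        exact hξball (by rwa [Metric.mem_ball, Real.dist_eq])
      have hle : ξ + z ≤ 2 * z - ε := by
        have h1 : ε ≤ z - ξ := le_trans (min_le_left _ _) (by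
          rwa [abs_sub_comm, abs_of_nonneg (by linarith)] at hdist)
        linarith
      have hge : 0 ≤ ξ + z := by linarith
      have hSa := hS a ha
      have hKnn : 0 ≤ K a ξ :=
        div_nonneg (Real.cosh_pos _).le (by positivity)
      have hKle : K a ξ ≤ Real.cosh ((2 * z - ε) / a) / (a * Real.sinh (2 * z / a)) := by
        apply (div_le_div_iff_of_pos_right (by positivity)).2
        rw [Real.cosh_le_cosh, abs_of_nonneg (div_nonneg hge ha.le),
          abs_of_nonneg (div_nonneg (by linarith) ha.le)]
        gcongr
      simp only [Pi.zero_apply, Real.dist_eq, zero_sub, abs_neg, abs_of_nonneg hKnn]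
      exact lt_of_le_of_lt hKle hMa)
    (Tendsto.congr' (f₁ := fun _ : ℝ => (1:ℝ))
      (by
        filter_upwards [self_mem_nhdsWithin] with a (ha : (0:ℝ) < a)
        rw [MeasureTheory.integral_Icc_eq_integral_Ioc,
          ← intervalIntegral.integral_of_le hzz, hint a ha])
      tendsto_const_nhds)
    (Eventually.of_forall fun a => ((hKcont a).aestronglyMeasurable))
    (hψ.integrableOn_Icc)
    ((hψ.tendsto z).mono_left nhdsWithin_le_nhds)
  refine key.congr fun a => ?_
  rw [MeasureTheory.integral_Icc_eq_integral_Ioc, ← intervalIntegral.integral_of_le hzz]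
  simp only [smul_eq_mul]
  rfl

/-- As `a → 0+`, the regularized shape functions `h_a` converge in the sense of
distributions to `q₋/(q₋−q₊) δ(ξ+z) − q₊/(q₋−q₊) δ(ξ−z)`: tested against any
continuous `φ`, `∫_{−z}^{z} h_a φ → (q₋ φ(−z) − q₊ φ(z))/(q₋ − q₊)`. -/
theorem regularized_shape_function_delta_limit
    (z qp qm : ℝ) (hz : 0 < z) (hq : qp ≠ qm)
    (φ : ℝ → ℝ) (hφ : Continuous φ) :
    Tendsto
      (fun a : ℝ => ∫ ξ in (-z)..z,
        ((qm * Real.cosh ((ξ - z) / a) - qp * Real.cosh ((ξ + z) / a)) /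
            (a * (qm - qp) * Real.sinh (2 * z / a))) * φ ξ)
      (nhdsWithin 0 (Ioi 0))
      (nhds ((qm * φ (-z) - qp * φ z) / (qm - qp))) := by
  have hc : qm - qp ≠ 0 := sub_ne_zero.2 (Ne.symm hq)
  have hS : ∀ a : ℝ, 0 < a → 0 < Real.sinh (2 * z / a) := by
    intro a ha
    rw [Real.sinh_pos_iff]; positivity
  -- the two peak limits
  have Iplus := peak_limit hz φ hφ
  have IminusAux := peak_limit hz (fun ξ => φ (-ξ)) (hφ.comp continuous_neg)
  have Iminus : Tendsto (fun a : ℝ => ∫ ξ in (-z)..z,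
      Real.cosh ((ξ - z) / a) / (a * Real.sinh (2 * z / a)) * φ ξ)
      (nhdsWithin 0 (Ioi 0)) (nhds (φ (-z))) := by
    refine IminusAux.congr fun a => ?_
    have hcn := intervalIntegral.integral_comp_neg (a := -z) (b := z)
      (f := fun ξ => Real.cosh ((ξ - z) / a) / (a * Real.sinh (2 * z / a)) * φ ξ)
    rw [neg_neg] at hcn
    rw [← hcn]
    congr 1
    funext ξ
    rw [show (-ξ - z) / a = -((ξ + z) / a) by ring, Real.cosh_neg]
  -- linear combination
  have comb : Tendsto (fun a : ℝ =>
      qm / (qm - qp) * (∫ ξ in (-z)..z,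
        Real.cosh ((ξ - z) / a) / (a * Real.sinh (2 * z / a)) * φ ξ)
      - qp / (qm - qp) * (∫ ξ in (-z)..z,
        Real.cosh ((ξ + z) / a) / (a * Real.sinh (2 * z / a)) * φ ξ))
      (nhdsWithin 0 (Ioi 0))
      (nhds (qm / (qm - qp) * φ (-z) - qp / (qm - qp) * φ z)) :=
    (Iminus.const_mul _).sub (Iplus.const_mul _)
  have hval : (qm * φ (-z) - qp * φ z) / (qm - qp)
      = qm / (qm - qp) * φ (-z) - qp / (qm - qp) * φ z := by ring
  rw [hval]
  refine Tendsto.congr' ?_ comb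
  filter_upwards [self_mem_nhdsWithin] with a (ha : (0:ℝ) < a)
  have hSa := hS a ha
  have hi1 : IntervalIntegrable
      (fun ξ => Real.cosh ((ξ - z) / a) / (a * Real.sinh (2 * z / a)) * φ ξ)
      MeasureTheory.volume (-z) z :=
    (((Real.continuous_cosh.comp (by continuity)).div_const _).mul hφ).intervalIntegrable _ _
  have hi2 : IntervalIntegrable
      (fun ξ => Real.cosh ((ξ + z) / a) / (a * Real.sinh (2 * z / a)) * φ ξ)
      MeasureTheory.volume (-z) z :=
    (((Real.continuous_cosh.comp (by continuity)).div_const _).mul hφ).intervalIntegrable _ _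
  rw [← intervalIntegral.integral_const_mul, ← intervalIntegral.integral_const_mul,
    ← intervalIntegral.integral_sub (hi1.const_mul _) (hi2.const_mul _)]
  apply intervalIntegral.integral_congr
  intro ξ _
  have haS : a * Real.sinh (2 * z / a) ≠ 0 := by positivity
  field_simp
end

section
/- Let q₊ > 0 > q₋ and q₀ < 0, and let q̂ : ℝ → ℝ be the piecewise linear kernel q̂(ξ) = q₀ + q₊ξ for ξ ≥ 0 and q̂(ξ) = q₀ + q₋ξ for ξ < 0. Define z = q₀(q₊ − q₋)/(2 q₊ q₋), α₊ = q₋/(q₋ − q₊), α₋ = −q₊/(q₋ − q₊). Then z > 0, α₊ + α₋ = 1, and α₊ q̂(ξ + z) + α₋ q̂(ξ − z) = 0 for all ξ ∈ (−z, z). Conversely, if z' > 0 and β₊, β₋ ∈ ℝ satisfy β₊ + β₋ = 1 and β₊ q̂(ξ + z') + β₋ q̂(ξ − z') = 0 for all ξ ∈ (−z', z'), then z' = z, β₊ = α₊ and β₋ = α₋. -/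
open Set

/-- For the piecewise linear kernel with `q₊ > 0 > q₋` and `q₀ < 0`, the
two-delta generalized shape function with weights `α₊ = q₋/(q₋−q₊)`,
`α₋ = −q₊/(q₋−q₊)` and `z = q₀(q₊−q₋)/(2q₊q₋)` solves the approximate
first-kind equation and is the unique normalized such solution. -/
theorem two_delta_solution_exists_unique
    (q₀ qp qm : ℝ) (hqp : 0 < qp) (hqm : qm < 0) (hq₀ : q₀ < 0)
    (qhat : ℝ → ℝ)
    (hqhat : ∀ ξ : ℝ, qhat ξ = if 0 ≤ ξ then q₀ + qp * ξ else q₀ + qm * ξ)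
    (z αp αm : ℝ)
    (hzdef : z = q₀ * (qp - qm) / (2 * qp * qm))
    (hαp : αp = qm / (qm - qp)) (hαm : αm = -qp / (qm - qp)) :
    (0 < z ∧ αp + αm = 1 ∧
      ∀ ξ ∈ Ioo (-z) z, αp * qhat (ξ + z) + αm * qhat (ξ - z) = 0) ∧
    (∀ z' : ℝ, 0 < z' → ∀ βp βm : ℝ, βp + βm = 1 →
      (∀ ξ ∈ Ioo (-z') z', βp * qhat (ξ + z') + βm * qhat (ξ - z') = 0) →
      z' = z ∧ βp = αp ∧ βm = αm) := by
  have hd : qm - qp ≠ 0 := by linarith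
  have hqp0 : qp ≠ 0 := ne_of_gt hqp
  have hqm0 : qm ≠ 0 := ne_of_lt hqm
  have hz : 0 < z := by
    rw [hzdef]
    apply div_pos_of_neg_of_neg
    · nlinarith
    · nlinarith
  constructor
  · refine ⟨hz, ?_, ?_⟩
    · rw [hαp, hαm]; field_simp; ring
    · intro ξ hξ
      have h1 : (0:ℝ) ≤ ξ + z := by linarith [hξ.1]
      have h2 : ¬ (0:ℝ) ≤ ξ - z := by push_neg; linarith [hξ.2]
      rw [hqhat, hqhat, if_pos h1, if_neg h2, hαp, hαm, hzdef]
      field_simp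
      ring
  · intro z' hz' βp βm hsum hsol
    have h0 := hsol 0 ⟨by linarith, hz'⟩
    have hh := hsol (z'/2) ⟨by linarith, by linarith⟩
    have e1 : (0:ℝ) ≤ 0 + z' := by linarith
    have e2 : ¬ (0:ℝ) ≤ 0 - z' := by push_neg; linarith
    have e3 : (0:ℝ) ≤ z'/2 + z' := by linarith
    have e4 : ¬ (0:ℝ) ≤ z'/2 - z' := by push_neg; linarith
    rw [hqhat, hqhat, if_pos e1, if_neg e2] at h0
    rw [hqhat, hqhat, if_pos e3, if_neg e4] at hh
    have key : (βp * qp + βm * qm) * (z'/2) = 0 := by linear_combination hh - h0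
    have key2 : βp * qp + βm * qm = 0 := by
      rcases mul_eq_zero.mp key with h | h
      · exact h
      · linarith
    have hbp : βp = qm / (qm - qp) := by
      field_simp
      linear_combination qm * hsum - key2
    have hbm : βm = -qp / (qm - qp) := by
      field_simp
      linear_combination (-qp) * hsum + key2
    have hz'' : z' = z := by
      rw [hzdef]
      have hne : 2 * qp * qm ≠ 0 := by nlinarith
      field_simp
      rw [hbp, hbm] at h0
      field_simp at h0
      nlinarith [h0]
    exact ⟨hz'', hbp.trans hαp.symm, hbm.trans hαm.symm⟩
end

section
/- Let q₀, q₊, q₋, q₂ ∈ ℝ with q₊ ≠ q₋, and let q̂ : ℝ → ℝ be the piecewise quadratic kernel q̂(ξ) = q₀ + q₊ξ + q₂ξ² for ξ ≥ 0 and q̂(ξ) = q₀ + q₋ξ + q₂ξ² for ξ < 0. Let z > 0 satisfy q₊ − q₋ + 4q₂z ≠ 0 and the quartic equation (q₊−q₋)q₀ + (4q₂q₀ − 2q₊q₋)z + 4q₂(q₊−q₋)z² + (32q₂²/3)z³ + (32q₂³/(3(q₊−q₋)))z⁴ = 0. Define ζ = −2q₂/(q₊−q₋) and α± = (q₊−q₋+4q₂z)/(2(q₊−q₋))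 ∓ (q₊+q₋)/(2(q₊−q₋+4q₂z)). Then α₊ + α₋ + 2ζz = 1, and α₊ q̂(ξ+z) + α₋ q̂(ξ−z) + ζ ∫_{−z}^{z} q̂(ξ−s) ds = 0 for all ξ ∈ (−z, z). -/
open Set intervalIntegral

private lemma poly_int (q₀ c q₂ a b : ℝ) :
    ∫ t in a..b, (q₀ + c * t + q₂ * t ^ 2) =
      (q₀ * b + c * (b ^ 2 / 2) + q₂ * (b ^ 3 / 3)) -
      (q₀ * a + c * (a ^ 2 / 2) + q₂ * (a ^ 3 / 3)) := by
  have h : ∀ x ∈ uIcc a b, HasDerivAt (fun x : ℝ => q₀ * x + c * (x ^ 2 / 2) + q₂ * (x ^ 3 / 3))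
      (q₀ + c * x + q₂ * x ^ 2) x := by
    intro x _
    have h2 : HasDerivAt (fun x : ℝ => x ^ 2) (2 * x) x := by simpa using hasDerivAt_pow 2 x
    have h3 : HasDerivAt (fun x : ℝ => x ^ 3) (3 * x ^ 2) x := by simpa using hasDerivAt_pow 3 x
    have := (((hasDerivAt_id x).const_mul q₀).add ((h2.div_const 2).const_mul c)).add
      ((h3.div_const 3).const_mul q₂)
    exact this.congr_deriv (by ring)
  rw [intervalIntegral.integral_eq_sub_of_hasDerivAt h
    (Continuous.intervalIntegrable (by fun_prop) a b)]

/-- For the piecewise quadratic kernel, the generalized shape function consisting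
of two delta functions at `±z` with weights `α±` plus a constant regular part
`ζ` is normalized and solves the approximate first-kind integral equation on
`(−z,z)`, provided `z > 0` is a root of the stated quartic equation. -/
theorem two_delta_plus_constant_solution_quadratic_kernel
    (q₀ qp qm q₂ : ℝ) (hq : qp ≠ qm)
    (qhat : ℝ → ℝ)
    (hqhat : ∀ ξ : ℝ,
      qhat ξ = if 0 ≤ ξ then q₀ + qp * ξ + q₂ * ξ ^ 2 else q₀ + qm * ξ + q₂ * ξ ^ 2)
    (z : ℝ) (hz : 0 < z) (hne : qp - qm + 4 * q₂ * z ≠ 0)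
    (hquartic :
      (qp - qm) * q₀ + (4 * q₂ * q₀ - 2 * qp * qm) * z +
        4 * q₂ * (qp - qm) * z ^ 2 + (32 * q₂ ^ 2 / 3) * z ^ 3 +
        (32 * q₂ ^ 3 / (3 * (qp - qm))) * z ^ 4 = 0)
    (ζ αp αm : ℝ)
    (hζ : ζ = -(2 * q₂) / (qp - qm))
    (hαp : αp = (qp - qm + 4 * q₂ * z) / (2 * (qp - qm)) -
        (qp + qm) / (2 * (qp - qm + 4 * q₂ * z)))
    (hαm : αm = (qp - qm + 4 * q₂ * z) / (2 * (qp - qm)) +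
        (qp + qm) / (2 * (qp - qm + 4 * q₂ * z))) :
    αp + αm + 2 * ζ * z = 1 ∧
      ∀ ξ ∈ Ioo (-z) z,
        αp * qhat (ξ + z) + αm * qhat (ξ - z) +
          ζ * ∫ s in (-z)..z, qhat (ξ - s) = 0 := by
  have hq' : qp - qm ≠ 0 := sub_ne_zero.mpr hq
  have hq4 : 3 * (qp - qm) ^ 2 * q₀ + 3 * (qp - qm) * (4 * q₂ * q₀ - 2 * qp * qm) * z +
      12 * q₂ * (qp - qm) ^ 2 * z ^ 2 + 32 * q₂ ^ 2 * (qp - qm) * z ^ 3 +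
      32 * q₂ ^ 3 * z ^ 4 = 0 := by
    have := hquartic
    field_simp at this
    linear_combination this
  refine ⟨by rw [hζ, hαp, hαm]; field_simp; ring, ?_⟩
  intro ξ hξ
  obtain ⟨h1, h2⟩ := hξ
  have hcont : Continuous qhat := by
    have hrep : qhat = fun ξ => q₀ + (qp + qm) / 2 * ξ + (qp - qm) / 2 * |ξ| + q₂ * ξ ^ 2 := by
      funext t
      rw [hqhat]
      rcases le_or_gt 0 t with h | h
      · rw [if_pos h, abs_of_nonneg h]; ring
      · rw [if_neg (not_le.2 h), abs_of_neg h]; ring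
    rw [hrep]
    fun_prop
  have hInt : ∫ s in (-z)..z, qhat (ξ - s) = ∫ t in (ξ - z)..(ξ + z), qhat t := by
    rw [intervalIntegral.integral_comp_sub_left qhat ξ, sub_neg_eq_add]
  have hsplit : ∫ t in (ξ - z)..(ξ + z), qhat t =
      (∫ t in (ξ - z)..(0:ℝ), qhat t) + ∫ t in (0:ℝ)..(ξ + z), qhat t :=
    (intervalIntegral.integral_add_adjacent_intervals
      (hcont.intervalIntegrable _ _) (hcont.intervalIntegrable _ _)).symm
  have hneg : ∫ t in (ξ - z)..(0:ℝ), qhat t =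
      ∫ t in (ξ - z)..(0:ℝ), (q₀ + qm * t + q₂ * t ^ 2) := by
    apply intervalIntegral.integral_congr
    intro t ht
    rw [uIcc_of_le (by linarith)] at ht
    rw [hqhat]
    rcases le_or_gt 0 t with h | h
    · have : t = 0 := le_antisymm ht.2 h
      simp [this]
    · rw [if_neg (not_le.2 h)]
  have hpos : ∫ t in (0:ℝ)..(ξ + z), qhat t =
      ∫ t in (0:ℝ)..(ξ + z), (q₀ + qp * t + q₂ * t ^ 2) := by
    apply intervalIntegral.integral_congr
    intro t ht
    rw [uIcc_of_le (by linarith)] at ht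
    rw [hqhat, if_pos ht.1]
  rw [hInt, hsplit, hneg, hpos, poly_int, poly_int,
    hqhat (ξ + z), hqhat (ξ - z), if_pos (by linarith), if_neg (by push_neg; linarith),
    hζ, hαp, hαm]
  field_simp
  linear_combination 2 * hq4
end

section
/- Let μ > 0, V > 0, and r > 0 satisfy the dispersion relation μ + 4 sin²(r/2) = V²r², and suppose ℓ := 2 sin r − 2V²r < 0 (so ℓ = L_k(r,V) and r is the single positive real root with waves behind the front). Define Σ = 2μ/(r|ℓ|), and let q₊, q₋ be determined by V²q± = ±μ − Σ(2+μ) − 4μ cos(r)/(r ℓ). Then q₋ < 0; and if moreover Σ < μ/(μ+4), then q₊ > 0. -/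
/-- Above the first resonance, with the single positive real root `r` of the
dispersion relation and `ℓ = L_k(r,V) < 0`, the stress `Σ = 2μ/(r|ℓ|)` and the
one-sided kernel derivatives `q±` determined by
`V²q± = ±μ − Σ(2+μ) − 4μ cos(r)/(rℓ)` satisfy `q₋ < 0`; and if moreover
`Σ < μ/(μ+4)` then `q₊ > 0`. -/
theorem kernel_one_sided_derivative_signs
    (μ V r : ℝ) (hμ : 0 < μ) (hV : 0 < V) (hr : 0 < r)
    (hdisp : μ + 4 * Real.sin (r / 2) ^ 2 = V ^ 2 * r ^ 2)
    (ℓ : ℝ) (hℓdef : ℓ = 2 * Real.sin r - 2 * V ^ 2 * r) (hℓneg : ℓ < 0)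
    (S : ℝ) (hS : S = 2 * μ / (r * |ℓ|))
    (qp qm : ℝ)
    (hqp : V ^ 2 * qp = μ - S * (2 + μ) - 4 * μ * Real.cos r / (r * ℓ))
    (hqm : V ^ 2 * qm = -μ - S * (2 + μ) - 4 * μ * Real.cos r / (r * ℓ)) :
    qm < 0 ∧ (S < μ / (μ + 4) → 0 < qp) := by
  have habs : |ℓ| = -ℓ := abs_of_neg hℓneg
  have hrℓ : r * ℓ < 0 := mul_neg_of_pos_of_neg hr hℓneg
  have hrℓ' : r * ℓ ≠ 0 := ne_of_lt hrℓ
  have hℓ0 : ℓ ≠ 0 := hℓneg.ne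
  have hSpos : 0 < S := by
    rw [hS, habs]
    exact div_pos (by linarith) (mul_pos hr (neg_pos.mpr hℓneg))
  have hSmul : S * (r * ℓ) = -(2 * μ) := by
    rw [hS, habs]
    field_simp
  -- key identity: 4μ cos r / (rℓ) = -(2 S cos r)
  have hkey : 4 * μ * Real.cos r / (r * ℓ) = -(2 * S * Real.cos r) := by
    rw [div_eq_iff hrℓ']
    linear_combination (2 * Real.cos r) * hSmul
  rw [hkey] at hqp hqm
  have hcos1 : Real.cos r ≤ 1 := Real.cos_le_one r
  have hcos2 : -1 ≤ Real.cos r := Real.neg_one_le_cos r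
  have hV2 : 0 < V ^ 2 := by positivity
  constructor
  · -- V² qm = -μ - S(2+μ) + 2S cos r ≤ -μ - Sμ < 0
    nlinarith [hqm]
  · intro hSlt
    have hμ4 : 0 < μ + 4 := by linarith
    have h1 : S * (μ + 4) < μ := (lt_div_iff₀ hμ4).mp hSlt
    nlinarith [hqp]
end
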